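/- For any α-sparse tensor S ∈ ℝ^{I₁×I₂×I₃}, the tensor spectral norm satisfies ‖S‖₂ ≤ α·I₃·√(I₁I₂)·‖S‖_∞. -/

import Mathlib

open scoped BigOperators
open Matrix

/-- An order-3 real tensor. -/
abbrev Tensor (I₁ I₂ I₃ : ℕ) := Fin I₁ → Fin I₂ → Fin I₃ → ℝ

namespace RTPCA

variable {I₁ I₂ I₃ J R : ℕ}

/-- The t-product, computed by circular convolution along the third mode
(equivalently, slice-wise products in the Fourier domain). -/
noncomputable def tprod (A : Tensor I₁ I₂ I₃) (B : Tensor I₂ J I₃) : Tensor I₁ J I₃ :=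
  fun i j k => ∑ l : Fin I₂, ∑ t : Fin I₃, A i l t * B l j (k - t)

/-- The tensor transpose: transpose each frontal slice and reverse the order
of the frontal slices 2 through I₃. -/
def tT (A : Tensor I₁ I₂ I₃) : Tensor I₂ I₁ I₃ :=
  fun j i k => A i j (-k)

/-- The identity tensor: first frontal slice is the identity, the rest are zero. -/
def idT (R I₃ : ℕ) : Tensor R R I₃ :=
  fun i j k => if i = j ∧ (k : ℕ) = 0 then 1 else 0

/-- Discrete Fourier transform along the third mode. -/
noncomputable def dft (A : Tensor I₁ I₂ I₃) (i : Fin I₁) (j : Fin I₂) (k : Fin I₃) : ℂ :=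
  ∑ t : Fin I₃, (A i j t : ℂ) *
    Complex.exp (-(2 * Real.pi * Complex.I * (k.val : ℂ) * (t.val : ℂ)) / (I₃ : ℂ))

/-- Fourier-domain frontal slice. -/
noncomputable def fSlice (A : Tensor I₁ I₂ I₃) (k : Fin I₃) : Matrix (Fin I₁) (Fin I₂) ℂ :=
  Matrix.of fun i j => dft A i j k

/-- Inverse DFT along the third mode (real part). -/
noncomputable def invDft (F : Fin I₁ → Fin I₂ → Fin I₃ → ℂ) : Tensor I₁ I₂ I₃ :=
  fun i j t =>
    ((∑ k : Fin I₃, F i j k *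
      Complex.exp ((2 * Real.pi * Complex.I * (k.val : ℂ) * (t.val : ℂ)) / (I₃ : ℂ))) / (I₃ : ℂ)).re

/-- Squared Frobenius norm. -/
noncomputable def fro2 (A : Tensor I₁ I₂ I₃) : ℝ := ∑ i, ∑ j, ∑ k, (A i j k) ^ 2

/-- Frobenius norm. -/
noncomputable def froNorm (A : Tensor I₁ I₂ I₃) : ℝ := Real.sqrt (fro2 A)

/-- Entrywise sup norm ‖A‖_∞. -/
noncomputable def infNorm (A : Tensor I₁ I₂ I₃) : ℝ := ⨆ i, ⨆ j, ⨆ k, |A i j k|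

/-- ℓ_{2,∞} norm: largest ℓ₂ norm of a horizontal slice. -/
noncomputable def twoInfNorm (A : Tensor I₁ I₂ I₃) : ℝ :=
  ⨆ i, Real.sqrt (∑ j, ∑ k, (A i j k) ^ 2)

/-- ℓ_{1,∞} norm: largest ℓ₁ norm of a horizontal slice. -/
noncomputable def oneInfNorm (A : Tensor I₁ I₂ I₃) : ℝ := ⨆ i, ∑ j, ∑ k, |A i j k|

/-- Spectral norm (largest singular value) of a complex matrix. -/
noncomputable def matSpecNorm {m n : ℕ} (M : Matrix (Fin m) (Fin n) ℂ) : ℝ :=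
  ‖LinearMap.toContinuousLinearMap (Matrix.toEuclideanLin M)‖

/-- Tensor spectral norm = tensor operator norm: the largest singular value of
the Fourier-domain frontal slices. -/
noncomputable def specNorm (A : Tensor I₁ I₂ I₃) : ℝ :=
  ⨆ k : Fin I₃, matSpecNorm (fSlice A k)

/-- f-diagonal in the Fourier domain with strictly positive diagonal entries. -/
def FDiagPos (S : Tensor R R I₃) : Prop :=
  (∀ k, ∀ i j : Fin R, i ≠ j → fSlice S k i j = 0) ∧
  (∀ k, ∀ i : Fin R, 0 < (fSlice S k i i).re ∧ (fSlice S k i i).im = 0)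

/-- f-diagonal in the Fourier domain with nonnegative diagonal entries. -/
def FDiagNonneg (S : Tensor R R I₃) : Prop :=
  (∀ k, ∀ i j : Fin R, i ≠ j → fSlice S k i j = 0) ∧
  (∀ k, ∀ i : Fin R, 0 ≤ (fSlice S k i i).re ∧ (fSlice S k i i).im = 0)

/-- Skinny t-SVD with tubal rank R (strictly positive Fourier-domain diagonal). -/
structure IsSkinnyTSVD (X : Tensor I₁ I₂ I₃) (U : Tensor I₁ R I₃)
    (S : Tensor R R I₃) (V : Tensor I₂ R I₃) : Prop where
  decomp : X = tprod (tprod U S) (tT V)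
  orthU : tprod (tT U) U = idT R I₃
  orthV : tprod (tT V) V = idT R I₃
  diag : FDiagPos S

/-- Skinny t-SVD with tubal rank at most R (nonnegative diagonal allowed). -/
structure IsSkinnyTSVDLe (X : Tensor I₁ I₂ I₃) (U : Tensor I₁ R I₃)
    (S : Tensor R R I₃) (V : Tensor I₂ R I₃) : Prop where
  decomp : X = tprod (tprod U S) (tT V)
  orthU : tprod (tT U) U = idT R I₃
  orthV : tprod (tT V) V = idT R I₃
  diag : FDiagNonneg S

/-- σ_min: the smallest Fourier-domain diagonal entry of Σ. -/
noncomputable def sigmaMin (S : Tensor R R I₃) : ℝ :=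
  ⨅ k : Fin I₃, ⨅ i : Fin R, (fSlice S k i i).re

/-- σ_max (= σ₁): the largest Fourier-domain diagonal entry of Σ. -/
noncomputable def sigmaMax (S : Tensor R R I₃) : ℝ :=
  ⨆ k : Fin I₃, ⨆ i : Fin R, (fSlice S k i i).re

/-- Condition number κ = σ_max / σ_min. -/
noncomputable def condNum (S : Tensor R R I₃) : ℝ := sigmaMax S / sigmaMin S

/-- Σ^{1/2}: entrywise square roots in the Fourier domain. -/
noncomputable def sqrtT (S : Tensor R R I₃) : Tensor R R I₃ :=
  invDft fun i j k => (Real.sqrt ((dft S i j k).re) : ℂ)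

/-- Σ^{-1/2}: entrywise reciprocal square roots in the Fourier domain. -/
noncomputable def invSqrtT (S : Tensor R R I₃) : Tensor R R I₃ :=
  invDft fun i j k => (((Real.sqrt ((dft S i j k).re))⁻¹ : ℝ) : ℂ)

/-- `Qi` is a two-sided t-product inverse of `Q` (i.e. `Q ∈ GL(R)`). -/
def TInv (Q Qi : Tensor R R I₃) : Prop :=
  tprod Q Qi = idT R I₃ ∧ tprod Qi Q = idT R I₃

/-- Alignment error (the quantity inside the infimum defining `distT`)
for a given invertible Q with inverse Qi. -/
noncomputable def alignErr (L Ls : Tensor I₁ R I₃) (Rt Rs : Tensor I₂ R I₃)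
    (Sh : Tensor R R I₃) (Q Qi : Tensor R R I₃) : ℝ :=
  Real.sqrt ((froNorm (tprod (tprod L Q - Ls) Sh)) ^ 2 +
    (froNorm (tprod (tprod Rt (tT Qi) - Rs) Sh)) ^ 2)

/-- The distance metric dist(L,R;L⋆,R⋆): the infimum of alignment errors over
invertible tensors Q, where `Sh` is Σ⋆^{1/2}. -/
noncomputable def distT (L Ls : Tensor I₁ R I₃) (Rt Rs : Tensor I₂ R I₃)
    (Sh : Tensor R R I₃) : ℝ :=
  sInf {d : ℝ | ∃ Q Qi : Tensor R R I₃, TInv Q Qi ∧ d = alignErr L Ls Rt Rs Sh Q Qi}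

/-- Q (with inverse Qi) is an optimal alignment tensor: it attains the infimum
defining the distance metric. -/
def IsOptAlign (L Ls : Tensor I₁ R I₃) (Rt Rs : Tensor I₂ R I₃)
    (Sh : Tensor R R I₃) (Q Qi : Tensor R R I₃) : Prop :=
  TInv Q Qi ∧ alignErr L Ls Rt Rs Sh Q Qi = distT L Ls Rt Rs Sh

/-- Entrywise soft-thresholding. -/
noncomputable def softThresh (ζ : ℝ) (A : Tensor I₁ I₂ I₃) : Tensor I₁ I₂ I₃ :=
  fun i j k => Real.sign (A i j k) * max 0 (|A i j k| - ζ)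

/-- Support: the set of index triples at which the tensor is nonzero. -/
def supp (A : Tensor I₁ I₂ I₃) : Set (Fin I₁ × Fin I₂ × Fin I₃) :=
  {p | A p.1 p.2.1 p.2.2 ≠ 0}

/-- α-sparsity: every horizontal, lateral and frontal slice has at most an
α fraction of nonzero entries. -/
def IsSparse (α : ℝ) (S : Tensor I₁ I₂ I₃) : Prop :=
  (∀ i₁ : Fin I₁, ({p : Fin I₂ × Fin I₃ | S i₁ p.1 p.2 ≠ 0}.ncard : ℝ) ≤ α * I₂ * I₃) ∧
  (∀ i₂ : Fin I₂, ({p : Fin I₁ × Fin I₃ | S p.1 i₂ p.2 ≠ 0}.ncard : ℝ) ≤ α * I₁ * I₃) ∧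
  (∀ i₃ : Fin I₃, ({p : Fin I₁ × Fin I₂ | S p.1 p.2 i₃ ≠ 0}.ncard : ℝ) ≤ α * I₁ * I₂)

/-- Tensor μ-incoherence conditions for the skinny t-SVD factors U, V. -/
def Incoherent (μ : ℝ) (U : Tensor I₁ R I₃) (V : Tensor I₂ R I₃) : Prop :=
  twoInfNorm U ≤ Real.sqrt (μ * R / I₁) ∧ twoInfNorm V ≤ Real.sqrt (μ * R / I₂)

/-- Top-R truncated t-SVD of A: a skinny t-SVD-shaped factorization which, in
every Fourier-domain frontal slice, keeps R largest singular values together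
with their singular vectors (the residual is orthogonal to the kept singular
vectors and its spectral norm is at most every kept singular value). -/
structure IsTruncTSVD (A : Tensor I₁ I₂ I₃) (U : Tensor I₁ R I₃)
    (S : Tensor R R I₃) (V : Tensor I₂ R I₃) : Prop where
  orthU : tprod (tT U) U = idT R I₃
  orthV : tprod (tT V) V = idT R I₃
  diag : FDiagNonneg S
  leftOrth : ∀ k, (fSlice U k)ᴴ * (fSlice A k - fSlice (tprod (tprod U S) (tT V)) k) = 0
  rightOrth : ∀ k, (fSlice A k - fSlice (tprod (tprod U S) (tT V)) k) * fSlice V k = 0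
  topR : ∀ k, ∀ r : Fin R,
    matSpecNorm (fSlice A k - fSlice (tprod (tprod U S) (tT V)) k) ≤ (fSlice S k r r).re

end RTPCA

open RTPCA



section Aux

lemma finSup_nonneg {n : ℕ} (f : Fin n → ℝ) (h : ∀ i, 0 ≤ f i) : 0 ≤ ⨆ i, f i := by
  cases isEmpty_or_nonempty (Fin n) with
  | inl hE => simp [Real.iSup_of_isEmpty]
  | inr hN =>
    exact le_ciSup_of_le (Set.Finite.bddAbove (Set.finite_range f)) (Classical.arbitrary _)
      (h _)

lemma le_finSup {n : ℕ} (f : Fin n → ℝ) (i : Fin n) : f i ≤ ⨆ j, f j :=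
  le_ciSup (Set.Finite.bddAbove (Set.finite_range f)) i

lemma matSpec_le_sqrt {m n : ℕ} (M : Matrix (Fin m) (Fin n) ℂ) {R C : ℝ}
    (hR0 : 0 ≤ R) (hC0 : 0 ≤ C)
    (hrow : ∀ i, ∑ j, ‖M i j‖ ≤ R) (hcol : ∀ j, ∑ i, ‖M i j‖ ≤ C) :
    matSpecNorm M ≤ Real.sqrt (R * C) := by
  apply ContinuousLinearMap.opNorm_le_bound _ (Real.sqrt_nonneg _)
  intro x
  have key : ‖(LinearMap.toContinuousLinearMap (Matrix.toEuclideanLin M)) x‖ ^ 2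
      ≤ R * C * ‖x‖ ^ 2 := by
    have hx : ‖x‖ ^ 2 = ∑ j, ‖x j‖ ^ 2 := by
      rw [EuclideanSpace.norm_eq, Real.sq_sqrt (by positivity)]
    rw [EuclideanSpace.norm_eq, Real.sq_sqrt (by positivity), hx]
    have happ : ∀ i, ‖(LinearMap.toContinuousLinearMap (Matrix.toEuclideanLin M)) x i‖
        ≤ ∑ j, ‖M i j‖ * ‖x j‖ := by
      intro i
      have : (LinearMap.toContinuousLinearMap (Matrix.toEuclideanLin M)) x i
          = ∑ j, M i j * x j := by
        simp [Matrix.toEuclideanLin_apply, Matrix.mulVec, dotProduct]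
      rw [this]
      exact (norm_sum_le _ _).trans (le_of_eq (by simp))
    calc ∑ i, ‖(LinearMap.toContinuousLinearMap (Matrix.toEuclideanLin M)) x i‖ ^ 2
        ≤ ∑ i, (∑ j, ‖M i j‖ * ‖x j‖) ^ 2 :=
          Finset.sum_le_sum fun i _ => pow_le_pow_left₀ (norm_nonneg _) (happ i) 2
      _ ≤ ∑ i, R * (∑ j, ‖M i j‖ * ‖x j‖ ^ 2) := by
          refine Finset.sum_le_sum fun i _ => ?_
          calc (∑ j, ‖M i j‖ * ‖x j‖) ^ 2
              ≤ (∑ j, ‖M i j‖) * (∑ j, ‖M i j‖ * ‖x j‖ ^ 2) := by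
                apply Finset.sum_sq_le_sum_mul_sum_of_sq_eq_mul
                · intro j _; exact norm_nonneg _
                · intro j _; positivity
                · intro j _; ring
            _ ≤ R * (∑ j, ‖M i j‖ * ‖x j‖ ^ 2) :=
                mul_le_mul_of_nonneg_right (hrow i)
                  (Finset.sum_nonneg fun j _ => by positivity)
      _ = R * ∑ j, (∑ i, ‖M i j‖) * ‖x j‖ ^ 2 := by
          rw [← Finset.mul_sum, Finset.sum_comm]
          congr 1; apply Finset.sum_congr rfl; intro j _; rw [Finset.sum_mul]
      _ ≤ R * ∑ j, C * ‖x j‖ ^ 2 :=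
          mul_le_mul_of_nonneg_left
            (Finset.sum_le_sum fun j _ =>
              mul_le_mul_of_nonneg_right (hcol j) (by positivity)) hR0
      _ = R * C * ∑ j, ‖x j‖ ^ 2 := by rw [← Finset.mul_sum, mul_assoc]
  calc ‖(LinearMap.toContinuousLinearMap (Matrix.toEuclideanLin M)) x‖
      ≤ Real.sqrt (R * C * ‖x‖ ^ 2) := by
        rw [← Real.sqrt_sq (norm_nonneg _)]
        exact Real.sqrt_le_sqrt key
    _ = Real.sqrt (R * C) * ‖x‖ := by
        rw [Real.sqrt_mul (by positivity), Real.sqrt_sq (norm_nonneg _)]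

lemma norm_dft_le {I₁ I₂ I₃ : ℕ} (A : Tensor I₁ I₂ I₃) (i : Fin I₁) (j : Fin I₂)
    (k : Fin I₃) : ‖dft A i j k‖ ≤ ∑ t, |A i j t| := by
  refine (norm_sum_le _ _).trans (le_of_eq ?_)
  apply Finset.sum_congr rfl
  intro t _
  have he : ‖Complex.exp (-(2 * Real.pi * Complex.I * (k.val : ℂ) * (t.val : ℂ)) / (I₃ : ℂ))‖
      = 1 := by
    have h : (-(2 * Real.pi * Complex.I * (k.val : ℂ) * (t.val : ℂ)) / (I₃ : ℂ))
        = ((-(2 * Real.pi * k.val * t.val) / I₃ : ℝ) : ℂ) * Complex.I := by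
      push_cast; ring
    rw [h, Complex.norm_exp_ofReal_mul_I]
  rw [norm_mul, he, mul_one, Complex.norm_real, Real.norm_eq_abs]

end Aux

/-- spectral norm bound for α-sparse tensors. -/
theorem specNorm_le_of_sparse
    {I₁ I₂ I₃ : ℕ} (α : ℝ) (S : Tensor I₁ I₂ I₃)
    (hS : IsSparse α S) :
    specNorm S ≤ α * I₃ * Real.sqrt ((I₁ : ℝ) * I₂) * infNorm S := by
  classical
  rcases Nat.eq_zero_or_pos I₃ with h3 | h3
  · subst h3
    have hL : specNorm S = 0 := Real.iSup_of_isEmpty _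
    rw [hL]
    norm_num
  have hB : 0 ≤ infNorm S := by
    apply finSup_nonneg; intro i
    apply finSup_nonneg; intro j
    apply finSup_nonneg; intro k
    exact abs_nonneg _
  have habs : ∀ i j t, |S i j t| ≤ infNorm S := by
    intro i j t
    calc |S i j t| ≤ ⨆ t', |S i j t'| := le_finSup (fun t' => |S i j t'|) t
      _ ≤ ⨆ j', ⨆ t', |S i j' t'| := le_finSup (fun j' => ⨆ t', |S i j' t'|) j
      _ ≤ ⨆ i', ⨆ j', ⨆ t', |S i' j' t'| :=
          le_finSup (fun i' => ⨆ j', ⨆ t', |S i' j' t'|) i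
      _ = infNorm S := rfl
  rcases Nat.eq_zero_or_pos I₁ with h1 | h1
  · subst h1
    have hz : ∀ k : Fin I₃, matSpecNorm (fSlice S k) = 0 := by
      intro k
      have h0 : LinearMap.toContinuousLinearMap (Matrix.toEuclideanLin (fSlice S k)) = 0 := by
        refine ContinuousLinearMap.ext fun x => ?_
        ext i
        exact i.elim0
      rw [matSpecNorm, h0, norm_zero]
    have hL : specNorm S = 0 := by
      have hne : Nonempty (Fin I₃) := ⟨⟨0, h3⟩⟩
      rw [specNorm]
      simp [hz]
    rw [hL]
    norm_num
  rcases Nat.eq_zero_or_pos I₂ with h2 | h2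
  · subst h2
    have hz : ∀ k : Fin I₃, matSpecNorm (fSlice S k) = 0 := by
      intro k
      have h0 : LinearMap.toContinuousLinearMap (Matrix.toEuclideanLin (fSlice S k)) = 0 := by
        refine ContinuousLinearMap.ext fun x => ?_
        have hx0 : x = 0 := by ext i; exact i.elim0
        rw [hx0]
        simp
      rw [matSpecNorm, h0, norm_zero]
    have hL : specNorm S = 0 := by
      have hne : Nonempty (Fin I₃) := ⟨⟨0, h3⟩⟩
      rw [specNorm]
      simp [hz]
    rw [hL]
    norm_num
  have hα : 0 ≤ α := by
    have h := hS.1 ⟨0, h1⟩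
    have h0 : (0 : ℝ) ≤ α * I₂ * I₃ := le_trans (Nat.cast_nonneg _) h
    have hpos : (0 : ℝ) < (I₂ : ℝ) * I₃ := by positivity
    nlinarith
  set B := infNorm S with hBdef
  have rowbound : ∀ i : Fin I₁, (∑ j, ∑ t, |S i j t|) ≤ α * I₂ * I₃ * B := by
    intro i
    set T : Finset (Fin I₂ × Fin I₃) :=
      Finset.univ.filter (fun p => S i p.1 p.2 ≠ 0) with hTdef
    have hT : ({p : Fin I₂ × Fin I₃ | S i p.1 p.2 ≠ 0}.ncard : ℝ) = T.card := by
      have hset : {p : Fin I₂ × Fin I₃ | S i p.1 p.2 ≠ 0} = ↑T := by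
        ext p; simp [hTdef]
      rw [hset, Set.ncard_coe_finset]
    calc (∑ j, ∑ t, |S i j t|)
        = ∑ p : Fin I₂ × Fin I₃, |S i p.1 p.2| := by rw [Fintype.sum_prod_type]
      _ = ∑ p ∈ T, |S i p.1 p.2| := by
          refine (Finset.sum_filter_of_ne ?_).symm
          intro p _ hp
          simpa using hp
      _ ≤ T.card • B := Finset.sum_le_card_nsmul T _ B (fun p _ => habs _ _ _)
      _ = (T.card : ℝ) * B := by rw [nsmul_eq_mul]
      _ ≤ α * I₂ * I₃ * B :=
          mul_le_mul_of_nonneg_right (hT ▸ hS.1 i) hB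
  have colbound : ∀ j : Fin I₂, (∑ i, ∑ t, |S i j t|) ≤ α * I₁ * I₃ * B := by
    intro j
    set T : Finset (Fin I₁ × Fin I₃) :=
      Finset.univ.filter (fun p => S p.1 j p.2 ≠ 0) with hTdef
    have hT : ({p : Fin I₁ × Fin I₃ | S p.1 j p.2 ≠ 0}.ncard : ℝ) = T.card := by
      have hset : {p : Fin I₁ × Fin I₃ | S p.1 j p.2 ≠ 0} = ↑T := by
        ext p; simp [hTdef]
      rw [hset, Set.ncard_coe_finset]
    calc (∑ i, ∑ t, |S i j t|)
        = ∑ p : Fin I₁ × Fin I₃, |S p.1 j p.2| := by rw [Fintype.sum_prod_type]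
      _ = ∑ p ∈ T, |S p.1 j p.2| := by
          refine (Finset.sum_filter_of_ne ?_).symm
          intro p _ hp
          simpa using hp
      _ ≤ T.card • B := Finset.sum_le_card_nsmul T _ B (fun p _ => habs _ _ _)
      _ = (T.card : ℝ) * B := by rw [nsmul_eq_mul]
      _ ≤ α * I₁ * I₃ * B :=
          mul_le_mul_of_nonneg_right (hT ▸ hS.2.1 j) hB
  haveI : Nonempty (Fin I₃) := ⟨⟨0, h3⟩⟩
  rw [specNorm]
  apply ciSup_le
  intro k
  have hrow : ∀ i, ∑ j, ‖fSlice S k i j‖ ≤ α * I₂ * I₃ * B := by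
    intro i
    exact le_trans (Finset.sum_le_sum fun j _ => norm_dft_le S i j k) (rowbound i)
  have hcol : ∀ j, ∑ i, ‖fSlice S k i j‖ ≤ α * I₁ * I₃ * B := by
    intro j
    exact le_trans (Finset.sum_le_sum fun i _ => norm_dft_le S i j k) (colbound j)
  have hR0 : (0 : ℝ) ≤ α * I₂ * I₃ * B := by positivity
  have hC0 : (0 : ℝ) ≤ α * I₁ * I₃ * B := by positivity
  calc matSpecNorm (fSlice S k)
      ≤ Real.sqrt ((α * I₂ * I₃ * B) * (α * I₁ * I₃ * B)) :=
        matSpec_le_sqrt _ hR0 hC0 hrow hcol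
    _ = α * I₃ * Real.sqrt ((I₁ : ℝ) * I₂) * B := by
        have h : (α * I₂ * I₃ * B) * (α * I₁ * I₃ * B)
            = (α * I₃ * B) ^ 2 * ((I₁ : ℝ) * I₂) := by ring
        rw [h, Real.sqrt_mul (sq_nonneg _), Real.sqrt_sq (by positivity)]
        ring
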